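/- Let α be a composition of n that is not of the form (1^{ℓ−1}, n−ℓ+1), and let P ∈ SIT*(α) with P ≠ S^0_α. Then there exist indices i_1,…,i_r such that successively applying π_{i_1}^{RS*},…,π_{i_r}^{RS*} to S^0_α yields 0, while successively applying the same operators in the same order to P yields a tableau Q ∈ SIT(α) with inv(σ(Q)) = inv(σ(P)) + r. -/

import Mathlib

open Classical

namespace ImmHecke

/-- A filling assigns a natural-number entry to each cell `(row, column)` (0-indexed);
row `0` is the bottom row.  Cells outside the diagram carry the junk value `0`. -/
abbrev Filling : Type := ℕ × ℕ → ℕ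

/-- `c` is a cell of the diagram of the composition `α` (0-indexed rows and columns;
row `i` has `α_i` cells). -/
def IsCell (α : List ℕ) (c : ℕ × ℕ) : Prop :=
  c.1 < α.length ∧ c.2 < α.getD c.1 0

/-- `α` is a composition of `n`: a list of positive integers summing to `n`. -/
def IsComposition (α : List ℕ) (n : ℕ) : Prop :=
  (∀ a ∈ α, 0 < a) ∧ α.sum = n

/-- `T` is a bijective filling of the diagram of `α` with the entries `1, …, n`
(where `n = α.sum`), and with value `0` off the diagram. -/
def IsStdFilling (α : List ℕ) (T : Filling) : Prop :=
  (∀ c, ¬ IsCell α c → T c = 0) ∧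
  (∀ c, IsCell α c → 1 ≤ T c ∧ T c ≤ α.sum) ∧
  (∀ c c', IsCell α c → IsCell α c' → T c = T c' → c = c') ∧
  (∀ m, 1 ≤ m → m ≤ α.sum → ∃ c, IsCell α c ∧ T c = m)

/-- A standard immaculate tableau of shape `α`: a bijective standard filling whose
first-column entries strictly increase bottom to top and whose rows strictly
increase left to right. -/
def IsSIT (α : List ℕ) (T : Filling) : Prop :=
  IsStdFilling α T ∧
  (∀ i i' : ℕ, IsCell α (i, 0) → IsCell α (i', 0) → i < i' → T (i, 0) < T (i', 0)) ∧
  (∀ i j j' : ℕ, IsCell α (i, j) → IsCell α (i, j') → j < j' → T (i, j) < T (i, j'))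

/-- A standard extended tableau of shape `α`: a bijective standard filling whose rows
strictly increase left to right and all of whose columns strictly increase
bottom to top.  Note `SET(α) ⊆ SIT(α)`. -/
def IsSET (α : List ℕ) (T : Filling) : Prop :=
  IsStdFilling α T ∧
  (∀ i j j' : ℕ, IsCell α (i, j) → IsCell α (i, j') → j < j' → T (i, j) < T (i, j')) ∧
  (∀ i i' j : ℕ, IsCell α (i, j) → IsCell α (i', j) → i < i' → T (i, j) < T (i', j))

/-- `SIT*(α)`: standard immaculate tableaux whose first column contains exactly the
entries `1, 2, …, ℓ(α)`. -/
def IsSITstar (α : List ℕ) (T : Filling) : Prop :=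
  IsSIT α T ∧
  (∀ i, IsCell α (i, 0) → 1 ≤ T (i, 0) ∧ T (i, 0) ≤ α.length) ∧
  (∀ m, 1 ≤ m → m ≤ α.length → ∃ i, IsCell α (i, 0) ∧ T (i, 0) = m)

/-- In `T`, the entry `m+1` lies in a row strictly above the row of `m`. -/
def SuccAbove (α : List ℕ) (T : Filling) (m : ℕ) : Prop :=
  ∃ c c', IsCell α c ∧ IsCell α c' ∧ T c = m ∧ T c' = m + 1 ∧ c.1 < c'.1

/-- In `T`, the entries `m` and `m+1` lie in the same row. -/
def SuccSameRow (α : List ℕ) (T : Filling) (m : ℕ) : Prop :=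
  ∃ c c', IsCell α c ∧ IsCell α c' ∧ T c = m ∧ T c' = m + 1 ∧ c.1 = c'.1

/-- In `T`, the entry `m+1` lies in a row strictly below the row of `m`. -/
def SuccBelow (α : List ℕ) (T : Filling) (m : ℕ) : Prop :=
  ∃ c c', IsCell α c ∧ IsCell α c' ∧ T c = m ∧ T c' = m + 1 ∧ c'.1 < c.1

/-- In `T`, the entries `m` and `m+1` are both in the first column. -/
def BothFirstColumn (α : List ℕ) (T : Filling) (m : ℕ) : Prop :=
  ∃ c c', IsCell α c ∧ IsCell α c' ∧ T c = m ∧ T c' = m + 1 ∧ c.2 = 0 ∧ c'.2 = 0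

/-- `s_i(T)`: exchange the entries `i` and `i+1` of `T`. -/
def swapEntries (i : ℕ) (T : Filling) : Filling :=
  fun c => if T c = i then i + 1 else if T c = i + 1 then i else T c

/-- The row-strict dual immaculate 0-Hecke operator `π_i^{RS*}` on `SIT(α) ∪ {0}`
(`0` is encoded as `none`): `π_i(T) = T` if `i+1` is strictly above `i`;
`π_i(T) = 0` if `i` and `i+1` are in the same row; `π_i(T) = s_i(T)` if `i+1` is
strictly below `i`. -/
noncomputable def piRS (α : List ℕ) (i : ℕ) : Option Filling → Option Filling
  | none => none
  | some T =>
    if SuccAbove α T i then some T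
    else if SuccSameRow α T i then none
    else some (swapEntries i T)

/-- The dual immaculate 0-Hecke operator `π_i^{S*}` on `SIT(α) ∪ {0}`:
`π_i(T) = T` if `i+1` is in a row weakly below `i`; `π_i(T) = 0` if `i` and `i+1`
are both in the first column; `π_i(T) = s_i(T)` if `i+1` is strictly above `i`
and `i, i+1` are not both in the first column. -/
noncomputable def piS (α : List ℕ) (i : ℕ) : Option Filling → Option Filling
  | none => none
  | some T =>
    if SuccSameRow α T i ∨ SuccBelow α T i then some T
    else if BothFirstColumn α T i then none
    else some (swapEntries i T)

/-- The 0-Hecke operator `π_i^{A*}` on `SIT(α)`: `π_i(T) = T` if `i+1` is strictly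
above `i` or in the same row as `i`; `π_i(T) = s_i(T)` if `i+1` is strictly below `i`. -/
noncomputable def piA (α : List ℕ) (i : ℕ) (T : Filling) : Filling :=
  if SuccBelow α T i then swapEntries i T else T

/-- The 0-Hecke operator `π_i^{Ā*}` on `SIT(α) ∪ {0}`: `π_i(T) = T` if `i+1` is
strictly below `i`; `π_i(T) = 0` if `i` and `i+1` are in the same row or both in
the first column; `π_i(T) = s_i(T)` if `i+1` is strictly above `i` and `i, i+1`
are not both in the first column. -/
noncomputable def piAbar (α : List ℕ) (i : ℕ) : Option Filling → Option Filling
  | none => none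
  | some T =>
    if SuccBelow α T i then some T
    else if SuccSameRow α T i ∨ BothFirstColumn α T i then none
    else some (swapEntries i T)

/-- `x` belongs to `SIT(α) ∪ {0}` (with `0 = none`). -/
def InSITZ (α : List ℕ) (x : Option Filling) : Prop :=
  ∀ T, x = some T → IsSIT α T

/-- Successively apply the operators `π_{i_1}^{RS*}, …, π_{i_r}^{RS*}` (the list `l = [i_1, …, i_r]`). -/
noncomputable def applySeqRS (α : List ℕ) (l : List ℕ) (x : Option Filling) : Option Filling :=
  l.foldl (fun y i => piRS α i y) x

/-- Successively apply the operators `π_{i_1}^{S*}, …, π_{i_r}^{S*}`. -/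
noncomputable def applySeqS (α : List ℕ) (l : List ℕ) (x : Option Filling) : Option Filling :=
  l.foldl (fun y i => piS α i y) x

/-- The relation `T₁ ≼ T₂` on `SIT(α)`: some sequence of operators `π_i^{RS*}`
(indices in `{1, …, n-1}`, possibly empty) sends `T₁` to `T₂`. -/
def preRS (α : List ℕ) (T₁ T₂ : Filling) : Prop :=
  ∃ l : List ℕ, (∀ i ∈ l, 1 ≤ i ∧ i ≤ α.sum - 1) ∧ applySeqRS α l (some T₁) = some T₂

/-- The one-line notation of `σ(T)`: read the entries of `T` from right to left in
each row, rows from top to bottom. -/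
def readingWord (α : List ℕ) (T : Filling) : List ℕ :=
  ((List.range α.length).reverse).flatMap
    (fun i => ((List.range (α.getD i 0)).map fun j => T (i, j)).reverse)

/-- The number of inversions of a word `w`: pairs of positions `p < q` with `w p > w q`. -/
def inversions (w : List ℕ) : ℕ :=
  ((Finset.range w.length ×ˢ Finset.range w.length).filter
    (fun pq : ℕ × ℕ => pq.1 < pq.2 ∧ w.getD pq.2 0 < w.getD pq.1 0)).card

/-- `S⁰_α`: first column contains `1, …, ℓ` bottom to top; the remaining cells are
filled with `ℓ+1, …, n` consecutively, reading rows from top to bottom and left to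
right within each row. -/
noncomputable def S0 (α : List ℕ) : Filling := fun c =>
  if IsCell α c then
    if c.2 = 0 then c.1 + 1
    else
      α.length + (((List.range α.length).filter fun r => c.1 < r).map fun r => α.getD r 0 - 1).sum + c.2
  else 0

/-- `S^{row}_α`: the row superstandard tableau, entries `1, …, n` placed consecutively
reading rows bottom to top, left to right within each row. -/
noncomputable def Srow (α : List ℕ) : Filling := fun c =>
  if IsCell α c then (α.take c.1).sum + c.2 + 1 else 0

/-- `S^{row*}_α`: first column contains `1, …, ℓ` bottom to top; the remaining cells
are filled with `ℓ+1, …, n` consecutively, reading rows bottom to top, left to right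
within each row. -/
noncomputable def SrowStar (α : List ℕ) : Filling := fun c =>
  if IsCell α c then
    if c.2 = 0 then c.1 + 1
    else α.length + ((List.range c.1).map fun r => α.getD r 0 - 1).sum + c.2
  else 0

/-- `S^{col}_α`: the column superstandard tableau, entries `1, …, n` placed
consecutively reading columns bottom to top, columns left to right. -/
noncomputable def Scol (α : List ℕ) : Filling := fun c =>
  if IsCell α c then
    ((List.range c.2).map fun j' =>
        ((List.range α.length).filter fun r => j' < α.getD r 0).length).sum
      + ((List.range c.1).filter fun r => c.2 < α.getD r 0).length + 1
  else 0

/-- The image of a basis element of `V_α` under the linearly extended operator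
`π_i^{RS*}` (the value `0` of the operator is interpreted as the zero vector). -/
noncomputable def piTargetRS (α : List ℕ) (i : ℕ) (T : {T : Filling // IsSIT α T}) :
    ({T : Filling // IsSIT α T} →₀ ℚ) :=
  match piRS α i (some T.val) with
  | none => 0
  | some T' => if h : IsSIT α T' then Finsupp.single ⟨T', h⟩ 1 else 0

/-- The operator `π_i^{RS*}` extended to a `ℚ`-linear endomorphism of the free
`ℚ`-vector space `V_α` with basis `SIT(α)`. -/
noncomputable def piRSLin (α : List ℕ) (i : ℕ) :
    ({T : Filling // IsSIT α T} →₀ ℚ) →ₗ[ℚ] ({T : Filling // IsSIT α T} →₀ ℚ) :=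
  Finsupp.lsum ℚ fun T => LinearMap.toSpanSingleton ℚ _ (piTargetRS α i T)

/-- The image of a basis element of `Z_α` under the linearly extended operator
`π_i^{RS*}`. -/
noncomputable def piTargetSET (α : List ℕ) (i : ℕ) (T : {T : Filling // IsSET α T}) :
    ({T : Filling // IsSET α T} →₀ ℚ) :=
  match piRS α i (some T.val) with
  | none => 0
  | some T' => if h : IsSET α T' then Finsupp.single ⟨T', h⟩ 1 else 0

/-- The operator `π_i^{RS*}` extended to a `ℚ`-linear endomorphism of the free
`ℚ`-vector space `Z_α` with basis `SET(α)`. -/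
noncomputable def piRSLinSET (α : List ℕ) (i : ℕ) :
    ({T : Filling // IsSET α T} →₀ ℚ) →ₗ[ℚ] ({T : Filling // IsSET α T} →₀ ℚ) :=
  Finsupp.lsum ℚ fun T => LinearMap.toSpanSingleton ℚ _ (piTargetSET α i T)

/-! ### Auxiliary machinery -/

section Aux

variable {α : List ℕ}

theorem applySeqRS_none (α : List ℕ) (l : List ℕ) : applySeqRS α l none = none := by
  induction l with
  | nil => rfl
  | cons a l ih =>
    show applySeqRS α l (piRS α a none) = none
    exact ih

theorem applySeqRS_append (α : List ℕ) (l₁ l₂ : List ℕ) (x : Option Filling) :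
    applySeqRS α (l₁ ++ l₂) x = applySeqRS α l₂ (applySeqRS α l₁ x) :=
  List.foldl_append

/-- The list `[b, b-1, …, a]`. -/
def descList (a b : ℕ) : List ℕ := (List.range' a (b + 1 - a)).reverse

theorem descList_len (a b : ℕ) : (descList a b).length = b + 1 - a := by
  simp [descList]

theorem descList_nil (b : ℕ) : descList (b + 1) b = [] := by
  rw [descList, show b + 1 - (b + 1) = 0 by omega]
  rfl

theorem descList_eq (a b : ℕ) (h : a ≤ b) : descList a b = descList (a + 1) b ++ [a] := by
  have h1 : b + 1 - a = (b - a) + 1 := by omega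
  have h2 : b + 1 - (a + 1) = b - a := by omega
  rw [descList, h1, List.range'_succ, List.reverse_cons, descList, h2]

/-- Cyclic relabelling: the value `b+1` becomes `a`, values in `[a,b]` increase by `1`. -/
def shift (T : Filling) (a b : ℕ) : Filling := fun c =>
  if T c = b + 1 then a else if a ≤ T c ∧ T c ≤ b then T c + 1 else T c

theorem shift_top (T : Filling) (b : ℕ) : shift T (b + 1) b = T := by
  funext c
  simp only [shift]
  split_ifs <;> omega

theorem piRS_some (α : List ℕ) (i : ℕ) (T : Filling) :
    piRS α i (some T) = if SuccAbove α T i then some T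
      else if SuccSameRow α T i then none else some (swapEntries i T) := rfl

theorem piRS_eq_swap {T : Filling} {i : ℕ} {c c' : ℕ × ℕ}
    (hc : IsCell α c) (hc' : IsCell α c') (hTc : T c = i) (hTc' : T c' = i + 1)
    (hu : ∀ d, IsCell α d → T d = i → d = c)
    (hu' : ∀ d, IsCell α d → T d = i + 1 → d = c')
    (hrow : c'.1 < c.1) :
    piRS α i (some T) = some (swapEntries i T) := by
  have hna : ¬ SuccAbove α T i := by
    rintro ⟨d, d', hd, hd', h1, h2, hlt⟩
    rw [hu d hd h1, hu' d' hd' h2] at hlt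
    omega
  have hns : ¬ SuccSameRow α T i := by
    rintro ⟨d, d', hd, hd', h1, h2, he⟩
    rw [hu d hd h1, hu' d' hd' h2] at he
    omega
  rw [piRS_some, if_neg hna, if_neg hns]

theorem piRS_eq_none {T : Filling} {i : ℕ} {c c' : ℕ × ℕ}
    (hc : IsCell α c) (hc' : IsCell α c') (hTc : T c = i) (hTc' : T c' = i + 1)
    (hu : ∀ d, IsCell α d → T d = i → d = c)
    (hu' : ∀ d, IsCell α d → T d = i + 1 → d = c')
    (hrow : c'.1 = c.1) :
    piRS α i (some T) = none := by
  have hna : ¬ SuccAbove α T i := by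
    rintro ⟨d, d', hd, hd', h1, h2, hlt⟩
    rw [hu d hd h1, hu' d' hd' h2] at hlt
    omega
  have hns : SuccSameRow α T i := ⟨c, c', hc, hc', hTc, hTc', hrow.symm⟩
  rw [piRS_some, if_neg hna, if_pos hns]

theorem sit_swap {T : Filling} {i : ℕ} {c c' : ℕ × ℕ}
    (hT : IsSIT α T)
    (hc : IsCell α c) (hc' : IsCell α c') (hTc : T c = i) (hTc' : T c' = i + 1)
    (hu : ∀ d, IsCell α d → T d = i → d = c)
    (hu' : ∀ d, IsCell α d → T d = i + 1 → d = c')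
    (hrow : c'.1 < c.1) : IsSIT α (swapEntries i T) := by
  obtain ⟨⟨hoff, hbd, hinj, hsurj⟩, hcol, hrw⟩ := hT
  have hi1 : 1 ≤ i := by have := (hbd c hc).1; omega
  have hin : i + 1 ≤ α.sum := by have := (hbd c' hc').2; omega
  have hsv : ∀ d, swapEntries i T d
      = if T d = i then i + 1 else if T d = i + 1 then i else T d := fun d => rfl
  refine ⟨⟨?_, ?_, ?_, ?_⟩, ?_, ?_⟩
  · intro d hd
    rw [hsv]
    have := hoff d hd
    split_ifs <;> omega
  · intro d hd
    rw [hsv]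
    have := hbd d hd
    split_ifs <;> omega
  · intro d d' hd hd' h
    rw [hsv, hsv] at h
    apply hinj d d' hd hd'
    split_ifs at h <;> omega
  · intro v h1 h2
    by_cases hv : v = i
    · exact ⟨c', hc', by rw [hsv, hTc']; split_ifs <;> omega⟩
    · by_cases hv' : v = i + 1
      · exact ⟨c, hc, by rw [hsv, hTc]; split_ifs <;> omega⟩
      · obtain ⟨d, hd, he⟩ := hsurj v h1 h2
        exact ⟨d, hd, by rw [hsv, he]; split_ifs <;> omega⟩
  · intro x x' hx hx' hlt
    have h0 := hcol x x' hx hx' hlt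
    by_cases hb : T (x, 0) = i ∧ T (x', 0) = i + 1
    · exfalso
      have e1 := hu _ hx hb.1
      have e2 := hu' _ hx' hb.2
      rw [← e1, ← e2] at hrow
      simp only at hrow
      omega
    · rw [hsv, hsv]
      split_ifs <;> omega
  · intro x y y' hx hx' hlt
    have h0 := hrw x y y' hx hx' hlt
    by_cases hb : T (x, y) = i ∧ T (x, y') = i + 1
    · exfalso
      have e1 := hu _ hx hb.1
      have e2 := hu' _ hx' hb.2
      rw [← e1, ← e2] at hrow
      simp only at hrow
      omega
    · rw [hsv, hsv]
      split_ifs <;> omega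

end Aux

section Aux2

variable {α : List ℕ}

/-- The cells in reading order: rows top to bottom, right to left within rows. -/
def cellList (α : List ℕ) : List (ℕ × ℕ) :=
  ((List.range α.length).reverse).flatMap fun i =>
    ((List.range (α.getD i 0)).map fun j => (i, j)).reverse

theorem readingWord_eq (α : List ℕ) (T : Filling) :
    readingWord α T = (cellList α).map T := by
  unfold readingWord cellList
  rw [List.map_flatMap]
  congr 1
  funext i
  rw [List.map_reverse, List.map_map]
  rfl

theorem mem_cellList {c : ℕ × ℕ} : c ∈ cellList α ↔ IsCell α c := by
  constructor
  · intro h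
    simp only [cellList, List.mem_flatMap, List.mem_reverse, List.mem_range, List.mem_map] at h
    obtain ⟨i, hi, j, hj, rfl⟩ := h
    exact ⟨hi, hj⟩
  · rintro ⟨h1, h2⟩
    simp only [cellList, List.mem_flatMap, List.mem_reverse, List.mem_range, List.mem_map]
    exact ⟨c.1, h1, c.2, h2, rfl⟩

theorem cellList_pairwise (α : List ℕ) :
    (cellList α).Pairwise fun c c' => c'.1 ≤ c.1 ∧ c ≠ c' := by
  rw [cellList, List.flatMap_def]
  rw [List.pairwise_flatten]
  constructor
  · intro l hl
    simp only [List.mem_map, List.mem_reverse, List.mem_range] at hl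
    obtain ⟨i, hi, rfl⟩ := hl
    rw [List.pairwise_reverse, List.pairwise_map]
    apply List.Pairwise.imp ?_ List.pairwise_lt_range
    intro a b hab
    constructor
    · simp
    · simp only [ne_eq, Prod.mk.injEq, not_and]
      intro _
      omega
  · rw [List.pairwise_map, List.pairwise_reverse]
    apply List.Pairwise.imp ?_ List.pairwise_lt_range
    intro a b hab x hx y hy
    simp only [List.mem_reverse, List.mem_map, List.mem_range] at hx hy
    obtain ⟨jx, hjx, rfl⟩ := hx
    obtain ⟨jy, hjy, rfl⟩ := hy
    constructor
    · simp
      omega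
    · simp only [ne_eq, Prod.mk.injEq, not_and]
      intro h
      omega

theorem card_filter_insert (N : ℕ) (u v : ℕ → ℕ) (p₁ p₂ : ℕ) (h₁ : p₁ < p₂) (h₂ : p₂ < N)
    (hiff : ∀ p q, p < N → q < N → p < q → ¬(p = p₁ ∧ q = p₂) → (v q < v p ↔ u q < u p))
    (hx : v p₂ < v p₁) (hnx : ¬ u p₂ < u p₁) :
    ((Finset.range N ×ˢ Finset.range N).filter
        (fun pq : ℕ × ℕ => pq.1 < pq.2 ∧ v pq.2 < v pq.1)).card
      = ((Finset.range N ×ˢ Finset.range N).filter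
        (fun pq : ℕ × ℕ => pq.1 < pq.2 ∧ u pq.2 < u pq.1)).card + 1 := by
  have hset : (Finset.range N ×ˢ Finset.range N).filter
        (fun pq : ℕ × ℕ => pq.1 < pq.2 ∧ v pq.2 < v pq.1)
      = insert (p₁, p₂) ((Finset.range N ×ˢ Finset.range N).filter
        (fun pq : ℕ × ℕ => pq.1 < pq.2 ∧ u pq.2 < u pq.1)) := by
    ext pq
    obtain ⟨p, q⟩ := pq
    simp only [Finset.mem_filter, Finset.mem_insert, Finset.mem_product, Finset.mem_range,
      Prod.mk.injEq]
    constructor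
    · rintro ⟨⟨hp, hq⟩, hpq, hlt⟩
      by_cases hnc : p = p₁ ∧ q = p₂
      · exact Or.inl hnc
      · exact Or.inr ⟨⟨hp, hq⟩, hpq, (hiff p q hp hq hpq hnc).mp hlt⟩
    · rintro (⟨rfl, rfl⟩ | ⟨⟨hp, hq⟩, hpq, hlt⟩)
      · exact ⟨⟨by omega, h₂⟩, h₁, hx⟩
      · by_cases hnc : p = p₁ ∧ q = p₂
        · obtain ⟨rfl, rfl⟩ := hnc
          exact absurd hlt hnx
        · exact ⟨⟨hp, hq⟩, hpq, (hiff p q hp hq hpq hnc).mpr hlt⟩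
  rw [hset]
  apply Finset.card_insert_of_notMem
  simp only [Finset.mem_filter]
  rintro ⟨-, -, hlt⟩
  exact hnx hlt

theorem inversions_map_swap (w : List ℕ) (i p₁ p₂ : ℕ) (h₁ : p₁ < p₂) (h₂ : p₂ < w.length)
    (hv₁ : w.getD p₁ 0 = i) (hv₂ : w.getD p₂ 0 = i + 1)
    (hu₁ : ∀ q, q < w.length → w.getD q 0 = i → q = p₁)
    (hu₂ : ∀ q, q < w.length → w.getD q 0 = i + 1 → q = p₂) :
    inversions (w.map fun x => if x = i then i + 1 else if x = i + 1 then i else x)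
      = inversions w + 1 := by
  have hlen : (w.map fun x => if x = i then i + 1 else if x = i + 1 then i else x).length
      = w.length := List.length_map _
  have hget : ∀ q, q < w.length →
      (w.map fun x => if x = i then i + 1 else if x = i + 1 then i else x).getD q 0
        = if w.getD q 0 = i then i + 1 else if w.getD q 0 = i + 1 then i else w.getD q 0 := by
    intro q h
    rw [List.getD_eq_getElem _ _ (by rw [hlen]; exact h), List.getElem_map,
      List.getD_eq_getElem _ _ h]
  unfold inversions
  rw [hlen]
  have hkey : ∀ p q, p < w.length → q < w.length → p < q → ¬(p = p₁ ∧ q = p₂) →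
      ((w.map fun x => if x = i then i + 1 else if x = i + 1 then i else x).getD q 0
        < (w.map fun x => if x = i then i + 1 else if x = i + 1 then i else x).getD p 0
       ↔ w.getD q 0 < w.getD p 0) := by
    intro p q hp hq hpq hnc
    rw [hget p hp, hget q hq]
    by_cases e1 : w.getD p 0 = i
    · have hpp := hu₁ p hp e1
      have e2 : w.getD q 0 ≠ i + 1 := fun h => hnc ⟨hpp, hu₂ q hq h⟩
      have e3 : w.getD q 0 ≠ i := fun h => by have := hu₁ q hq h; omega
      rw [if_pos e1, if_neg e3, if_neg e2]
      omega
    · by_cases e2 : w.getD p 0 = i + 1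
      · have hpp := hu₂ p hp e2
        have e3 : w.getD q 0 ≠ i + 1 := fun h => by have := hu₂ q hq h; omega
        have e4 : w.getD q 0 ≠ i := fun h => by have := hu₁ q hq h; omega
        rw [if_neg e1, if_pos e2, if_neg e4, if_neg e3]
        omega
      · by_cases e3 : w.getD q 0 = i
        · rw [if_neg e1, if_neg e2, if_pos e3]
          omega
        · by_cases e4 : w.getD q 0 = i + 1
          · rw [if_neg e1, if_neg e2, if_neg e3, if_pos e4]
            omega
          · rw [if_neg e1, if_neg e2, if_neg e3, if_neg e4]
  apply card_filter_insert w.length (fun q => w.getD q 0)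
      (fun q => (w.map fun x => if x = i then i + 1 else if x = i + 1 then i else x).getD q 0)
      p₁ p₂ h₁ h₂
  · intro p q hp hq hpq hnc
    exact hkey p q hp hq hpq hnc
  · show (w.map fun x => if x = i then i + 1 else if x = i + 1 then i else x).getD p₂ 0
      < (w.map fun x => if x = i then i + 1 else if x = i + 1 then i else x).getD p₁ 0
    rw [hget p₁ (by omega), hget p₂ h₂, hv₁, hv₂]
    simp
  · show ¬ w.getD p₂ 0 < w.getD p₁ 0
    rw [hv₁, hv₂]
    omega

theorem inv_swap {T : Filling} {i : ℕ} {c c' : ℕ × ℕ}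
    (hc : IsCell α c) (hc' : IsCell α c') (hTc : T c = i) (hTc' : T c' = i + 1)
    (hu : ∀ d, IsCell α d → T d = i → d = c)
    (hu' : ∀ d, IsCell α d → T d = i + 1 → d = c')
    (hrow : c'.1 < c.1) :
    inversions (readingWord α (swapEntries i T)) = inversions (readingWord α T) + 1 := by
  obtain ⟨p₁, hp₁, he₁⟩ := List.getElem_of_mem (mem_cellList.mpr hc)
  obtain ⟨p₂, hp₂, he₂⟩ := List.getElem_of_mem (mem_cellList.mpr hc')
  have hpair := List.pairwise_iff_getElem.mp (cellList_pairwise α)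
  have hlen : (readingWord α T).length = (cellList α).length := by
    rw [readingWord_eq]
    exact List.length_map _
  have hw : ∀ q (h : q < (cellList α).length), (readingWord α T).getD q 0 = T ((cellList α)[q]'h) := by
    intro q h
    rw [readingWord_eq, List.getD_eq_getElem _ _ (by simpa using h), List.getElem_map]
  have hlt : p₁ < p₂ := by
    rcases lt_trichotomy p₁ p₂ with h | h | h
    · exact h
    · exfalso
      subst h
      have hcc : c = c' := he₁.symm.trans he₂
      rw [hcc] at hrow
      exact lt_irrefl _ hrow
    · exfalso
      have := (hpair p₂ p₁ hp₂ hp₁ h).1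
      rw [he₁, he₂] at this
      omega
  have huq : ∀ q (hq : q < (cellList α).length), T ((cellList α)[q]'hq) = i → q = p₁ := by
    intro q hq hTq
    have hcq : IsCell α ((cellList α)[q]'hq) := mem_cellList.mp (List.getElem_mem _)
    have heq : (cellList α)[q]'hq = (cellList α)[p₁] := by rw [he₁]; exact hu _ hcq hTq
    by_contra hne'
    rcases lt_or_gt_of_ne hne' with h | h
    · exact (hpair q p₁ hq hp₁ h).2 heq
    · exact (hpair p₁ q hp₁ hq h).2 heq.symm
  have huq' : ∀ q (hq : q < (cellList α).length), T ((cellList α)[q]'hq) = i + 1 → q = p₂ := by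
    intro q hq hTq
    have hcq : IsCell α ((cellList α)[q]'hq) := mem_cellList.mp (List.getElem_mem _)
    have heq : (cellList α)[q]'hq = (cellList α)[p₂] := by rw [he₂]; exact hu' _ hcq hTq
    by_contra hne'
    rcases lt_or_gt_of_ne hne' with h | h
    · exact (hpair q p₂ hq hp₂ h).2 heq
    · exact (hpair p₂ q hp₂ hq h).2 heq.symm
  have hmap : readingWord α (swapEntries i T) =
      (readingWord α T).map fun x => if x = i then i + 1 else if x = i + 1 then i else x := by
    rw [readingWord_eq, readingWord_eq, List.map_map]
    rfl
  rw [hmap]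
  refine inversions_map_swap _ i p₁ p₂ hlt (by omega) ?_ ?_ ?_ ?_
  · rw [hw p₁ hp₁, he₁, hTc]
  · rw [hw p₂ hp₂, he₂, hTc']
  · intro q hq h
    exact huq q (by omega) (by rw [← hw q (by omega)]; exact h)
  · intro q hq h
    exact huq' q (by omega) (by rw [← hw q (by omega)]; exact h)

end Aux2

section Aux3

variable {α : List ℕ}

theorem chain_main (T : Filling) (a b : ℕ) (pos : ℕ → ℕ × ℕ) (cs : ℕ × ℕ)
    (hab : a ≤ b + 1)
    (hcell : ∀ k, a ≤ k → k ≤ b → IsCell α (pos k)) (hcs : IsCell α cs)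
    (hval : ∀ k, a ≤ k → k ≤ b → T (pos k) = k) (hvs : T cs = b + 1)
    (huniq : ∀ k, a ≤ k → k ≤ b → ∀ c, IsCell α c → T c = k → c = pos k)
    (huniqs : ∀ c, IsCell α c → T c = b + 1 → c = cs)
    (hrow : ∀ k, a ≤ k → k ≤ b → cs.1 < (pos k).1) :
    applySeqRS α (descList a b) (some T) = some (shift T a b) ∧
      (IsSIT α T → IsSIT α (shift T a b) ∧
        inversions (readingWord α (shift T a b)) =
          inversions (readingWord α T) + (b + 1 - a)) := by
  suffices H : ∀ d, d ≤ b + 1 - a →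
      applySeqRS α (descList (b + 1 - d) b) (some T) = some (shift T (b + 1 - d) b) ∧
      (IsSIT α T → IsSIT α (shift T (b + 1 - d) b) ∧
        inversions (readingWord α (shift T (b + 1 - d) b)) =
          inversions (readingWord α T) + d) by
    have h := H (b + 1 - a) le_rfl
    rw [show b + 1 - (b + 1 - a) = a by omega] at h
    exact h
  intro d
  induction d with
  | zero =>
    intro _
    rw [Nat.sub_zero, shift_top, descList_nil]
    exact ⟨rfl, fun h => ⟨h, rfl⟩⟩
  | succ d ih =>
    intro hd
    obtain ⟨ih1, ih2⟩ := ih (by omega)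
    set k := b - d with hkdef
    have hk1 : b + 1 - (d + 1) = k := by omega
    have hk2 : b + 1 - d = k + 1 := by omega
    have hka : a ≤ k := by omega
    have hkb : k ≤ b := by omega
    rw [hk2] at ih1 ih2
    rw [hk1]
    set S := shift T (k + 1) b with hS
    have hSdef : ∀ c, S c = if T c = b + 1 then k + 1
        else if k + 1 ≤ T c ∧ T c ≤ b then T c + 1 else T c := fun c => rfl
    have hSk : S (pos k) = k := by
      rw [hSdef, hval k hka hkb]
      split_ifs <;> omega
    have hSs : S cs = k + 1 := by
      rw [hSdef, hvs]
      split_ifs <;> omega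
    have hSuk : ∀ c, IsCell α c → S c = k → c = pos k := by
      intro c hc h
      rw [hSdef] at h
      split_ifs at h with h1 h2
      · exfalso; omega
      · exfalso; omega
      · exact huniq k hka hkb c hc h
    have hSuk1 : ∀ c, IsCell α c → S c = k + 1 → c = cs := by
      intro c hc h
      rw [hSdef] at h
      split_ifs at h with h1 h2
      · exact huniqs c hc h1
      · exfalso; omega
      · exfalso; omega
    have hswap : piRS α k (some S) = some (swapEntries k S) :=
      piRS_eq_swap (hcell k hka hkb) hcs hSk hSs hSuk hSuk1 (hrow k hka hkb)
    have heq : swapEntries k S = shift T k b := by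
      funext c
      simp only [swapEntries, hSdef, shift]
      split_ifs <;> omega
    have hlist : descList k b = descList (k + 1) b ++ [k] := descList_eq k b hkb
    constructor
    · rw [hlist, applySeqRS_append, ih1]
      show piRS α k (some S) = _
      rw [hswap, heq]
    · intro hT
      obtain ⟨hS1, hS2⟩ := ih2 hT
      have hsit : IsSIT α (shift T k b) := by
        rw [← heq]
        exact sit_swap hS1 (hcell k hka hkb) hcs hSk hSs hSuk hSuk1 (hrow k hka hkb)
      refine ⟨hsit, ?_⟩
      have hstep := inv_swap (hcell k hka hkb) hcs hSk hSs hSuk hSuk1 (hrow k hka hkb)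
      rw [heq] at hstep
      rw [hstep, hS2]
      omega

theorem chain_kill (T : Filling) (a b : ℕ) (pos : ℕ → ℕ × ℕ) (cs : ℕ × ℕ)
    (hab : a ≤ b)
    (hcell : ∀ k, a ≤ k → k ≤ b → IsCell α (pos k)) (hcs : IsCell α cs)
    (hval : ∀ k, a ≤ k → k ≤ b → T (pos k) = k) (hvs : T cs = b + 1)
    (huniq : ∀ k, a ≤ k → k ≤ b → ∀ c, IsCell α c → T c = k → c = pos k)
    (huniqs : ∀ c, IsCell α c → T c = b + 1 → c = cs)
    (hrow : ∀ k, a < k → k ≤ b → cs.1 < (pos k).1)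
    (hrowa : (pos a).1 = cs.1) :
    applySeqRS α (descList a b) (some T) = none := by
  have hmain := chain_main T (a + 1) b pos cs (by omega)
    (fun k h1 h2 => hcell k (by omega) h2) hcs
    (fun k h1 h2 => hval k (by omega) h2) hvs
    (fun k h1 h2 => huniq k (by omega) h2) huniqs
    (fun k h1 h2 => hrow k (by omega) h2)
  rw [descList_eq a b hab, applySeqRS_append, hmain.1]
  set S := shift T (a + 1) b with hS
  have hSdef : ∀ c, S c = if T c = b + 1 then a + 1
      else if a + 1 ≤ T c ∧ T c ≤ b then T c + 1 else T c := fun c => rfl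
  have hSk : S (pos a) = a := by
    rw [hSdef, hval a le_rfl hab]
    split_ifs <;> omega
  have hSs : S cs = a + 1 := by
    rw [hSdef, hvs]
    split_ifs <;> omega
  have hSuk : ∀ c, IsCell α c → S c = a → c = pos a := by
    intro c hc h
    rw [hSdef] at h
    split_ifs at h with h1 h2
    · exfalso; omega
    · exfalso; omega
    · exact huniq a le_rfl hab c hc h
  have hSuk1 : ∀ c, IsCell α c → S c = a + 1 → c = cs := by
    intro c hc h
    rw [hSdef] at h
    split_ifs at h with h1 h2
    · exact huniqs c hc h1
    · exfalso; omega
    · exfalso; omega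
  show piRS α a (some S) = none
  exact piRS_eq_none (hcell a le_rfl hab) hcs hSk hSs hSuk hSuk1 hrowa.symm

end Aux3

section Aux4

variable {α : List ℕ}

theorem getD_pos (hpos : ∀ a ∈ α, 0 < a) {i : ℕ} (h : i < α.length) : 0 < α.getD i 0 := by
  rw [List.getD_eq_getElem _ _ h]
  exact hpos _ (List.getElem_mem _)

theorem range_filter_gt (ℓ i : ℕ) :
    (List.range ℓ).filter (fun r => i < r) = List.range' (i + 1) (ℓ - (i + 1)) := by
  induction ℓ with
  | zero => simp
  | succ ℓ ih =>
    rw [List.range_succ, List.filter_append, ih]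
    by_cases h : i < ℓ
    · have h2 : ℓ + 1 - (i + 1) = (ℓ - (i + 1)) + 1 := by omega
      rw [h2, List.range'_concat]
      have h3 : (i + 1) + 1 * (ℓ - (i + 1)) = ℓ := by omega
      rw [h3]
      simp [h]
    · have h2 : ℓ + 1 - (i + 1) = ℓ - (i + 1) := by omega
      rw [h2]
      simp [h]

/-- `fsum α i` = sum of `α_r - 1` over rows `r > i`. -/
def fsum (α : List ℕ) (i : ℕ) : ℕ :=
  (((List.range α.length).filter fun r => i < r).map fun r => α.getD r 0 - 1).sum

theorem fsum_eq (i : ℕ) :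
    fsum α i = ((List.range' (i + 1) (α.length - (i + 1))).map fun r => α.getD r 0 - 1).sum := by
  rw [fsum, range_filter_gt]

theorem fsum_zero (i : ℕ) (h : α.length ≤ i + 1) : fsum α i = 0 := by
  rw [fsum_eq, show α.length - (i + 1) = 0 by omega]
  rfl

theorem fsum_step (i : ℕ) (h : i + 1 < α.length) :
    fsum α i = (α.getD (i + 1) 0 - 1) + fsum α (i + 1) := by
  rw [fsum_eq, fsum_eq]
  rw [show α.length - (i + 1) = (α.length - (i + 2)) + 1 by omega, List.range'_succ]
  simp

theorem fsum_succ_le (i : ℕ) : fsum α (i + 1) ≤ fsum α i := by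
  by_cases h : i + 1 < α.length
  · rw [fsum_step i h]
    omega
  · rw [fsum_zero (i + 1) (by omega), fsum_zero i (by omega)]

theorem fsum_anti {i j : ℕ} (h : i ≤ j) : fsum α j ≤ fsum α i := by
  induction j, h using Nat.le_induction with
  | base => exact le_rfl
  | succ j hj ih => exact le_trans (fsum_succ_le j) ih

theorem fsum_gap {i j : ℕ} (h1 : i < j) (h2 : j < α.length) :
    fsum α j + (α.getD j 0 - 1) ≤ fsum α i := by
  have h3 := fsum_step (α := α) (j - 1) (by omega)
  rw [show j - 1 + 1 = j by omega] at h3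
  have h4 : fsum α (j - 1) ≤ fsum α i := fsum_anti (by omega)
  omega

theorem range'_map_getD_sum (α : List ℕ) (s : ℕ) :
    ((List.range' s (α.length - s)).map fun r => α.getD r 0 - 1).sum
      = ((α.drop s).map fun a => a - 1).sum := by
  obtain ⟨n, hn⟩ : ∃ n, α.length - s = n := ⟨_, rfl⟩
  induction n generalizing s with
  | zero =>
    rw [hn, List.drop_eq_nil_of_le (by omega), List.range'_zero]
    rfl
  | succ n ih =>
    have hs : s < α.length := by omega
    have h1 := ih (s + 1) (by omega)
    rw [show α.length - (s + 1) = n by omega] at h1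
    rw [hn, List.range'_succ, List.map_cons, List.sum_cons, h1,
      List.drop_eq_getElem_cons hs, List.map_cons, List.sum_cons,
      List.getD_eq_getElem _ _ hs]

theorem map_sub_one_sum (L : List ℕ) (h : ∀ a ∈ L, 0 < a) :
    (L.map fun a => a - 1).sum + L.length = L.sum := by
  induction L with
  | nil => simp
  | cons a L ih =>
    simp only [List.map_cons, List.sum_cons, List.length_cons]
    have h1 := h a List.mem_cons_self
    have h2 := ih fun b hb => h b (List.mem_cons_of_mem _ hb)
    omega

theorem fsum_total (h : 0 < α.length) (hpos : ∀ a ∈ α, 0 < a) :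
    α.length + fsum α 0 + (α.getD 0 0 - 1) = α.sum := by
  have h1 : fsum α 0 = ((α.drop 1).map fun a => a - 1).sum := by
    rw [fsum_eq]
    exact range'_map_getD_sum α 1
  have h2 := map_sub_one_sum (α.drop 1) fun x hx => hpos x (List.mem_of_mem_drop hx)
  have h3 := List.drop_eq_getElem_cons (i := 0) (l := α) h
  rw [List.drop_zero] at h3
  have h4 : α.sum = α[0] + (α.drop 1).sum := by
    conv_lhs => rw [h3]
    rw [List.sum_cons]
  have h5 : (α.drop 1).length = α.length - 1 := List.length_drop
  have h6 : α.getD 0 0 = α[0] := List.getD_eq_getElem _ _ h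
  have h7 : 0 < α[0] := hpos _ (List.getElem_mem _)
  omega

theorem S0_off {c : ℕ × ℕ} (h : ¬ IsCell α c) : S0 α c = 0 := by
  simp only [S0]
  rw [if_neg h]

theorem S0_val {i j : ℕ} (h : IsCell α (i, j)) :
    S0 α (i, j) = if j = 0 then i + 1 else α.length + fsum α i + j := by
  simp only [S0]
  rw [if_pos h]
  rfl

theorem S0_inj {c d : ℕ × ℕ} (hpos : ∀ a ∈ α, 0 < a)
    (hc : IsCell α c) (hd : IsCell α d) (h : S0 α c = S0 α d) : c = d := by
  obtain ⟨i, j⟩ := c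
  obtain ⟨i', j'⟩ := d
  rw [S0_val hc, S0_val hd] at h
  have hc1 : i < α.length := hc.1
  have hd1 : i' < α.length := hd.1
  have hc2 : j < α.getD i 0 := hc.2
  have hd2 : j' < α.getD i' 0 := hd.2
  by_cases h1 : j = 0 <;> by_cases h2 : j' = 0
  · rw [if_pos h1, if_pos h2] at h
    subst h1; subst h2
    simp only [Prod.mk.injEq]
    exact ⟨by omega, trivial⟩
  · rw [if_pos h1, if_neg h2] at h
    exfalso; omega
  · rw [if_neg h1, if_pos h2] at h
    exfalso; omega
  · rw [if_neg h1, if_neg h2] at h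
    rcases lt_trichotomy i i' with hlt | heq | hgt
    · exfalso
      have hgap : fsum α i' + (α.getD i' 0 - 1) ≤ fsum α i := fsum_gap hlt hd1
      omega
    · subst heq
      simp only [Prod.mk.injEq]
      exact ⟨trivial, by omega⟩
    · exfalso
      have hgap : fsum α i + (α.getD i 0 - 1) ≤ fsum α i' := fsum_gap hgt hc1
      omega

theorem S0_exists_cell (hpos : ∀ a ∈ α, 0 < a) {v : ℕ} (hv1 : α.length < v) (hv2 : v ≤ α.sum) :
    ∃ r0 j0, IsCell α (r0, j0) ∧ 1 ≤ j0 ∧ α.length + fsum α r0 + j0 = v := by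
  have hl : 0 < α.length := by
    by_contra h
    have : α = [] := List.length_eq_zero_iff.mp (by omega)
    subst this
    simp at hv1 hv2
    omega
  have hfind : ∃ i, fsum α i < v - α.length := ⟨α.length, by rw [fsum_zero _ (by omega)]; omega⟩
  set i₀ := Nat.find hfind with hi₀def
  have hi₀ : fsum α i₀ < v - α.length := Nat.find_spec hfind
  have hcell : i₀ < α.length ∧ v - α.length - fsum α i₀ < α.getD i₀ 0 := by
    rcases Nat.eq_zero_or_pos i₀ with h0 | h0
    · rw [h0] at hi₀ ⊢
      have := fsum_total hl hpos
      have := getD_pos hpos hl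
      exact ⟨hl, by omega⟩
    · have hmin : ¬ fsum α (i₀ - 1) < v - α.length := Nat.find_min hfind (by omega)
      have hi₀l : i₀ < α.length := by
        by_contra hge
        rw [fsum_zero (i₀ - 1) (by omega)] at hmin
        omega
      have hstep := fsum_step (α := α) (i₀ - 1) (by omega)
      rw [show i₀ - 1 + 1 = i₀ by omega] at hstep
      have := getD_pos hpos hi₀l
      exact ⟨hi₀l, by omega⟩
  exact ⟨i₀, v - α.length - fsum α i₀, ⟨hcell.1, hcell.2⟩, by omega, by omega⟩

theorem firstcol {P : Filling} (hpos : ∀ a ∈ α, 0 < a) (hP : IsSITstar α P) :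
    ∀ i, i < α.length → P (i, 0) = i + 1 := by
  have hcell : ∀ i, i < α.length → IsCell α (i, 0) := fun i h => ⟨h, getD_pos hpos h⟩
  have hlow : ∀ i, i < α.length → i + 1 ≤ P (i, 0) := by
    intro i
    induction i with
    | zero => intro h; exact (hP.2.1 0 (hcell 0 h)).1
    | succ i ih =>
      intro h
      have h1 := ih (by omega)
      have h2 := hP.1.2.1 i (i + 1) (hcell i (by omega)) (hcell _ h) (by omega)
      omega
  have hhigh : ∀ d i, i < α.length → α.length - 1 - i = d → P (i, 0) ≤ i + 1 := by
    intro d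
    induction d with
    | zero =>
      intro i h hd
      have := (hP.2.1 i (hcell i h)).2
      omega
    | succ d ih =>
      intro i h hd
      have h2 := hP.1.2.1 i (i + 1) (hcell i h) (hcell (i + 1) (by omega)) (by omega)
      have := ih (i + 1) (by omega) (by omega)
      omega
  intro i h
  have := hlow i h
  have := hhigh (α.length - 1 - i) i h rfl
  omega

theorem exists_min {p : ℕ → Prop} (h : ∃ n, p n) : ∃ n, p n ∧ ∀ k, k < n → ¬ p k := by
  obtain ⟨n, hn⟩ := h
  induction n using Nat.strong_induction_on with
  | _ n ih =>
    by_cases h' : ∃ k, k < n ∧ p k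
    · obtain ⟨k, hk, hpk⟩ := h'
      exact ih k hk hpk
    · push_neg at h'
      exact ⟨n, hn, h'⟩

end Aux4

theorem exists_seq_kills_S0_not_P (n : ℕ) (α : List ℕ) (hα : IsComposition α n)
    (hhook : ¬ (∀ k, k + 1 < α.length → α.getD k 0 = 1))
    (P : Filling) (hP : IsSITstar α P) (hne : P ≠ S0 α) :
    ∃ l : List ℕ, (∀ i ∈ l, 1 ≤ i ∧ i ≤ n - 1) ∧
      applySeqRS α l (some (S0 α)) = none ∧
      ∃ Q : Filling, IsSIT α Q ∧ applySeqRS α l (some P) = some Q ∧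
        inversions (readingWord α Q) = inversions (readingWord α P) + l.length := by
  classical
  clear hhook
  obtain ⟨hpos, rfl⟩ := hα
  have hPsit : IsSIT α P := hP.1
  obtain ⟨⟨hoff, hbd, hinj, hsurj⟩, hcol, hrw⟩ := hP.1
  have hfc := firstcol hpos hP
  have hcell0 : ∀ i, i < α.length → IsCell α (i, 0) := fun i h => ⟨h, getD_pos hpos h⟩
  have hex : ∃ v, 1 ≤ v ∧ ¬ ∃ d, IsCell α d ∧ P d = v ∧ S0 α d = v := by
    by_contra hcon
    push_neg at hcon
    apply hne
    funext d
    by_cases hd : IsCell α d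
    · obtain ⟨e, he, hPe, hSe⟩ := hcon (P d) (hbd d hd).1
      cases hinj e d he hd hPe
      exact hSe.symm
    · rw [hoff d hd, S0_off hd]
  obtain ⟨m, ⟨hm1, hmD⟩, hmin⟩ := exists_min hex
  have hshared : ∀ v, 1 ≤ v → v < m → ∃ d, IsCell α d ∧ P d = v ∧ S0 α d = v := by
    intro v h1 h2
    by_contra hno
    exact hmin v h2 ⟨h1, hno⟩
  have hmn : m ≤ α.sum := by
    obtain ⟨d, hd⟩ : ∃ d, P d ≠ S0 α d := by
      by_contra hall
      push_neg at hall
      exact hne (funext hall)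
    have hdc : IsCell α d := by
      by_contra hdc
      rw [hoff d hdc, S0_off hdc] at hd
      exact hd rfl
    have hb := hbd d hdc
    have hDP : 1 ≤ P d ∧ ¬ ∃ e, IsCell α e ∧ P e = P d ∧ S0 α e = P d := by
      refine ⟨hb.1, ?_⟩
      rintro ⟨e, he, hPe, hSe⟩
      cases hinj e d he hdc hPe
      exact hd hSe.symm
    have hble : ¬ P d < m := fun hlt => hmin (P d) hlt hDP
    omega
  have hmℓ : α.length < m := by
    by_contra hh
    push_neg at hh
    refine hmD ⟨(m - 1, 0), hcell0 _ (by omega), ?_, ?_⟩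
    · rw [hfc _ (by omega)]; omega
    · rw [S0_val (hcell0 _ (by omega)), if_pos rfl]; omega
  have hℓ1 : 1 ≤ α.length := by
    by_contra hh
    have hnil : α = [] := List.length_eq_zero_iff.mp (by omega)
    subst hnil
    simp at hmn
    omega
  have hsh' : ∀ v, ∃ d, 1 ≤ v → v < m → IsCell α d ∧ P d = v ∧ S0 α d = v := by
    intro v
    by_cases h : 1 ≤ v ∧ v < m
    · obtain ⟨d, hd⟩ := hshared v h.1 h.2
      exact ⟨d, fun _ _ => hd⟩
    · exact ⟨(0, 0), fun h1 h2 => absurd ⟨h1, h2⟩ h⟩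
  choose cv hcv using hsh'
  obtain ⟨r0, j0, hc0, hj0, hs0⟩ := S0_exists_cell hpos hmℓ hmn
  have hc01 : r0 < α.length := hc0.1
  have hc02 : j0 < α.getD r0 0 := hc0.2
  have hS0r0 : S0 α (r0, j0) = m := by
    rw [S0_val hc0, if_neg (by omega)]
    exact hs0
  obtain ⟨⟨r, j⟩, hcr, hPr⟩ := hsurj m hm1 hmn
  have hcr1 : r < α.length := hcr.1
  have hcr2 : j < α.getD r 0 := hcr.2
  have hj : 1 ≤ j := by
    rcases Nat.eq_zero_or_pos j with h0 | h0
    · exfalso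
      subst h0
      rw [hfc r hcr.1] at hPr
      omega
    · exact h0
  have hKV : ∀ d, IsCell α d → S0 α d < m → P d = S0 α d := by
    intro d hd hlt
    have h1 : 1 ≤ S0 α d := by
      obtain ⟨x, y⟩ := d
      rw [S0_val hd]
      split_ifs <;> omega
    obtain ⟨he, hPe, hSe⟩ := hcv (S0 α d) h1 hlt
    exact (congrArg P (S0_inj hpos he hd hSe)).symm.trans hPe
  have hgt : m < S0 α (r, j) := by
    rcases lt_trichotomy (S0 α (r, j)) m with h0 | h0 | h0
    · exfalso
      have := hKV _ hcr h0
      omega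
    · exact absurd ⟨(r, j), hcr, hPr, h0⟩ hmD
    · exact h0
  have hS0rj : S0 α (r, j) = α.length + fsum α r + j := by
    rw [S0_val hcr, if_neg (by omega)]
  have hj1 : j = 1 := by
    by_contra hh
    have h2 : 2 ≤ j := by omega
    have hcell' : IsCell α (r, j - 1) := ⟨hcr1, by show j - 1 < α.getD r 0; omega⟩
    have hPlt : P (r, j - 1) < P (r, j) := hrw r (j - 1) j hcell' hcr (by omega)
    have hKV' : S0 α (r, j - 1) = P (r, j - 1) := by
      have h1 : 1 ≤ P (r, j - 1) := (hbd _ hcell').1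
      obtain ⟨he, hPe, hSe⟩ := hcv (P (r, j - 1)) h1 (by omega)
      exact (congrArg (S0 α) (hinj _ _ he hcell' hPe)).symm.trans hSe
    rw [S0_val hcell', if_neg (by omega)] at hKV'
    omega
  subst hj1
  have hrr0 : r < r0 := by
    by_contra hh
    push_neg at hh
    have := fsum_anti (α := α) hh
    omega
  have hrowfact : ∀ x y, IsCell α (x, y) → 1 ≤ y → α.length + fsum α x + y < m →
      r0 ≤ x ∧ (x = r0 → 2 ≤ j0) := by
    intro x y hcxy hy hlt
    have hxr : r0 ≤ x := by
      by_contra hx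
      push_neg at hx
      have hgap := fsum_gap (α := α) hx hc0.1
      have hj0' : j0 ≤ α.getD r0 0 - 1 := by
        have := getD_pos hpos hc01
        omega
      omega
    refine ⟨hxr, ?_⟩
    intro hxe
    subst hxe
    omega
  set b := m - 1 with hbdef
  set a := if 2 ≤ j0 then m - 1 else r0 + 1 with hadef
  have hb1 : b + 1 = m := by omega
  have har0 : r0 + 1 ≤ a := by
    rw [hadef]
    split_ifs with hsp
    · omega
    · omega
  have hab : a ≤ b := by
    rw [hadef, hbdef]
    split_ifs with hsp
    · omega
    · omega
  have hposP' : ∀ k, ∃ d, a ≤ k → k ≤ b → IsCell α d ∧ P d = k ∧ r < d.1 := by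
    intro k
    by_cases hk : a ≤ k ∧ k ≤ b
    · by_cases hkl : k ≤ α.length
      · refine ⟨(k - 1, 0), fun _ _ => ⟨hcell0 _ (by omega), ?_, ?_⟩⟩
        · rw [hfc _ (by omega)]; omega
        · show r < k - 1
          omega
      · obtain ⟨hd, hPd, hSd⟩ := hcv k (by omega) (by omega)
        rcases hxy : cv k with ⟨x, y⟩
        rw [hxy] at hd hPd hSd
        have hd1 : x < α.length := hd.1
        have hd2 : y < α.getD x 0 := hd.2
        have hy : 1 ≤ y := by
          rcases Nat.eq_zero_or_pos y with h0 | h0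
          · exfalso
            subst h0
            rw [hfc x hd.1] at hPd
            omega
          · exact h0
        have hSv : α.length + fsum α x + y = k := by
          rw [S0_val hd, if_neg (by omega)] at hSd
          exact hSd
        have hrf := hrowfact x y hd hy (by omega)
        exact ⟨(x, y), fun _ _ => ⟨hd, hPd, by show r < x; omega⟩⟩
    · exact ⟨(0, 0), fun h1 h2 => absurd ⟨h1, h2⟩ hk⟩
  choose posP hposP using hposP'
  have hchainP := chain_main (α := α) P a b posP (r, 1) (by omega)
    (fun k h1 h2 => ((hposP k) h1 h2).1) hcr
    (fun k h1 h2 => ((hposP k) h1 h2).2.1) (by rw [hb1]; exact hPr)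
    (fun k h1 h2 c hc hTc => hinj c _ hc ((hposP k) h1 h2).1
      (by rw [hTc, ((hposP k) h1 h2).2.1]))
    (fun c hc hTc => hinj c _ hc hcr (by rw [hTc, hPr, hb1]))
    (fun k h1 h2 => ((hposP k) h1 h2).2.2)
  obtain ⟨hPrun, hPsit'⟩ := hchainP
  obtain ⟨hQsit, hQinv⟩ := hPsit' hPsit
  have hposS' : ∀ k, ∃ d, a ≤ k → k ≤ b →
      IsCell α d ∧ S0 α d = k ∧ (a < k → r0 < d.1) ∧ (k = a → d.1 = r0) := by
    intro k
    by_cases hk : a ≤ k ∧ k ≤ b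
    · by_cases hkl : k ≤ α.length
      · refine ⟨(k - 1, 0), fun _ _ => ⟨hcell0 _ (by omega), ?_, ?_, ?_⟩⟩
        · rw [S0_val (hcell0 _ (by omega)), if_pos rfl]
          omega
        · intro h
          show r0 < k - 1
          omega
        · intro hka
          show k - 1 = r0
          by_cases hsp : 2 ≤ j0
          · exfalso
            rw [hadef, if_pos hsp] at hka
            omega
          · rw [hadef, if_neg hsp] at hka
            omega
      · obtain ⟨hd, hPd, hSd⟩ := hcv k (by omega) (by omega)
        rcases hxy : cv k with ⟨x, y⟩
        rw [hxy] at hd hPd hSd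
        have hd1 : x < α.length := hd.1
        have hd2 : y < α.getD x 0 := hd.2
        have hy : 1 ≤ y := by
          rcases Nat.eq_zero_or_pos y with h0 | h0
          · exfalso
            subst h0
            rw [hfc x hd.1] at hPd
            omega
          · exact h0
        have hSv : α.length + fsum α x + y = k := by
          rw [S0_val hd, if_neg (by omega)] at hSd
          exact hSd
        have hrf := hrowfact x y hd hy (by omega)
        refine ⟨(x, y), fun _ _ => ⟨hd, hSd, ?_, ?_⟩⟩
        · intro hak
          show r0 < x
          by_cases hsp : 2 ≤ j0
          · exfalso
            rw [hadef, if_pos hsp] at hak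
            omega
          · rcases Nat.lt_or_ge r0 x with h0 | h0
            · exact h0
            · exfalso
              have hx0 : x = r0 := by omega
              have := hrf.2 hx0
              omega
        · intro hka
          show x = r0
          by_cases hsp : 2 ≤ j0
          · have hcell'' : IsCell α (r0, j0 - 1) := ⟨hc01, by show j0 - 1 < α.getD r0 0; omega⟩
            have hSm1 : S0 α (r0, j0 - 1) = k := by
              rw [S0_val hcell'', if_neg (by omega)]
              rw [hadef, if_pos hsp] at hka
              omega
            have hthis := S0_inj hpos hd hcell'' (hSd.trans hSm1.symm)
            rw [Prod.mk.injEq] at hthis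
            exact hthis.1
          · exfalso
            rw [hadef, if_neg hsp] at hka
            omega
    · exact ⟨(0, 0), fun h1 h2 => absurd ⟨h1, h2⟩ hk⟩
  choose posS hposS using hposS'
  have hkill := chain_kill (α := α) (S0 α) a b posS (r0, j0) hab
    (fun k h1 h2 => ((hposS k) h1 h2).1) hc0
    (fun k h1 h2 => ((hposS k) h1 h2).2.1) (by rw [hb1]; exact hS0r0)
    (fun k h1 h2 c hc hTc => S0_inj hpos hc ((hposS k) h1 h2).1
      (hTc.trans ((hposS k) h1 h2).2.1.symm))
    (fun c hc hTc => S0_inj hpos hc hc0 (by rw [hTc, hS0r0, hb1]))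
    (fun k h1 h2 => ((hposS k) (by omega) h2).2.2.1 h1)
    (((hposS a) le_rfl hab).2.2.2 rfl)
  refine ⟨descList a b, ?_, hkill, shift P a b, hQsit, hPrun, ?_⟩
  · intro x hx
    rw [descList, List.mem_reverse, List.mem_range'_1] at hx
    constructor
    · omega
    · omega
  · rw [hQinv, descList_len]

end ImmHecke
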